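/- Let A be an n×m real matrix with no zero rows and no zero columns. Then the infimum, over all multiplicities k : Fin n → ℕ₊ and l : Fin m → ℕ₊, of √(n'·m')·‖A'‖ — where A' is the split matrix of A with multiplicities k and l, and n' = Σᵢ k_i, m' = Σⱼ l_j — equals the infimum, over all vectors w ∈ ℝⁿ and v ∈ ℝ^m with strictly positive entries, of ‖D_w⁻¹ A D_v⁻¹‖·‖w‖·‖v‖. Here ‖·‖ is the ℓ²→ℓ² operator norm and D_w is the diagonal matrix with w on the diagonal. -/

import Mathlib

open scoped BigOperators

/-- The ℓ²→ℓ² operator norm of a real matrix. -/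
noncomputable def l2OpNorm {α β : Type*} [Fintype α] [Fintype β] [DecidableEq β]
    (A : Matrix α β ℝ) : ℝ :=
  ‖LinearMap.toContinuousLinearMap (Matrix.toEuclideanLin A)‖

/-- The ∞→1 norm of a real matrix: `max_{x ∈ {-1,1}ⁿ, y ∈ {-1,1}^m} xᵀ A y`. -/
noncomputable def normInftyOne {α β : Type*} [Fintype α] [Fintype β] (A : Matrix α β ℝ) : ℝ :=
  ⨆ p : (α → Bool) × (β → Bool),
    ∑ i, ∑ j, (if p.1 i then (1:ℝ) else -1) * A i j * (if p.2 j then (1:ℝ) else -1)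

/-- The Grothendieck norm: sup over `k` and families of unit vectors of `Σ a_{ij} ⟨p_i, q_j⟩`. -/
noncomputable def grothendieckNorm {α β : Type*} [Fintype α] [Fintype β]
    (A : Matrix α β ℝ) : ℝ :=
  sSup { r : ℝ | ∃ (k : ℕ) (p : α → EuclideanSpace ℝ (Fin k)) (q : β → EuclideanSpace ℝ (Fin k)),
    (∀ i, ‖p i‖ = 1) ∧ (∀ j, ‖q j‖ = 1) ∧
    r = ∑ i, ∑ j, A i j * (inner ℝ (p i) (q j) : ℝ) }

/-- The matrix obtained from `A` by splitting row `i` into `k i` equal rows and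
column `j` into `l j` equal columns. -/
noncomputable def splitMatrix {n m : ℕ} (A : Matrix (Fin n) (Fin m) ℝ)
    (k : Fin n → ℕ+) (l : Fin m → ℕ+) :
    Matrix ((i : Fin n) × Fin (k i : ℕ)) ((j : Fin m) × Fin (l j : ℕ)) ℝ :=
  fun p q => A p.1 q.1 / (((k p.1 : ℕ) : ℝ) * ((l q.1 : ℕ) : ℝ))

/-! ### Auxiliary lemmas -/

section Aux

set_option maxHeartbeats 1000000

open scoped Matrix.Norms.L2Operator
open scoped Matrix

lemma l2OpNorm_eq_norm {α β : Type*} [Fintype α] [Fintype β] [DecidableEq β]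
    (A : Matrix α β ℝ) : l2OpNorm A = ‖A‖ := rfl

lemma norm_one_le_aux {α : Type*} [Fintype α] [DecidableEq α] :
    ‖(1 : Matrix α α ℝ)‖ ≤ 1 := by
  rw [Matrix.l2_opNorm_def]
  refine ContinuousLinearMap.opNorm_le_bound _ zero_le_one fun x => ?_
  rw [one_mul]
  simp [Matrix.toEuclideanLin_apply]

lemma norm_diagonal_le_one {α : Type*} [Fintype α] [DecidableEq α] (c : α → ℝ)
    (h : ∀ i, |c i| ≤ 1) : ‖(Matrix.diagonal c : Matrix α α ℝ)‖ ≤ 1 := by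
  rw [Matrix.l2_opNorm_def]
  refine ContinuousLinearMap.opNorm_le_bound _ zero_le_one fun x => ?_
  rw [one_mul]
  have this' : (Matrix.toEuclideanLin (Matrix.diagonal c)) x =
      (WithLp.equiv 2 (α → ℝ)).symm (fun i => c i * x i) := by
    rw [Matrix.toEuclideanLin_apply]
    congr 1
    ext i
    simp [Matrix.mulVec_diagonal]
  have e : ((Matrix.toEuclideanLin ≪≫ₗ LinearMap.toContinuousLinearMap) (Matrix.diagonal c)) x
      = (WithLp.equiv 2 (α → ℝ)).symm (fun i => c i * x i) := this'
  rw [e]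
  rw [EuclideanSpace.norm_eq, EuclideanSpace.norm_eq]
  apply Real.sqrt_le_sqrt
  apply Finset.sum_le_sum
  intro i _
  simp only [WithLp.equiv_symm_apply, WithLp.ofLp_toLp, Real.norm_eq_abs, abs_mul, mul_pow]
  have h1 : |c i| ^ 2 ≤ 1 := by
    have := h i
    nlinarith [abs_nonneg (c i)]
  nlinarith [sq_nonneg |x i|, abs_nonneg (x i)]

lemma norm_le_one_of_iso {α α' : Type*} [Fintype α] [Fintype α'] [DecidableEq α]
    (P : Matrix α' α ℝ) (hP : Pᴴ * P = 1) : ‖P‖ ≤ 1 := by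
  have h := Matrix.l2_opNorm_conjTranspose_mul_self P
  rw [hP] at h
  nlinarith [norm_nonneg P, norm_one_le_aux (α := α), h]

lemma norm_conj_iso {α α' β β' : Type*} [Fintype α] [Fintype α'] [Fintype β] [Fintype β']
    [DecidableEq α] [DecidableEq α'] [DecidableEq β] [DecidableEq β']
    (P : Matrix α' α ℝ) (Q : Matrix β' β ℝ) (hP : Pᴴ * P = 1) (hQ : Qᴴ * Q = 1)
    (M : Matrix α β ℝ) : ‖P * M * Qᴴ‖ = ‖M‖ := by
  have hPn := norm_le_one_of_iso P hP
  have hQn := norm_le_one_of_iso Q hQ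
  have hPt : ‖Pᴴ‖ ≤ 1 := by rw [Matrix.l2_opNorm_conjTranspose]; exact hPn
  have hQt : ‖Qᴴ‖ ≤ 1 := by rw [Matrix.l2_opNorm_conjTranspose]; exact hQn
  apply le_antisymm
  · calc ‖P * M * Qᴴ‖ ≤ ‖P * M‖ * ‖Qᴴ‖ := Matrix.l2_opNorm_mul _ _
      _ ≤ ‖P * M‖ := mul_le_of_le_one_right (norm_nonneg _) hQt
      _ ≤ ‖P‖ * ‖M‖ := Matrix.l2_opNorm_mul _ _
      _ ≤ ‖M‖ := mul_le_of_le_one_left (norm_nonneg _) hPn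
  · have hM : M = Pᴴ * (P * M * Qᴴ) * Q := by
      have h2 : Pᴴ * (P * M * Qᴴ) * Q = (Pᴴ * P) * M * (Qᴴ * Q) := by
        simp only [Matrix.mul_assoc]
      rw [h2, hP, hQ, Matrix.one_mul, Matrix.mul_one]
    calc ‖M‖ = ‖Pᴴ * (P * M * Qᴴ) * Q‖ := by rw [← hM]
      _ ≤ ‖Pᴴ * (P * M * Qᴴ)‖ * ‖Q‖ := Matrix.l2_opNorm_mul _ _
      _ ≤ ‖Pᴴ * (P * M * Qᴴ)‖ := mul_le_of_le_one_right (norm_nonneg _) hQn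
      _ ≤ ‖Pᴴ‖ * ‖P * M * Qᴴ‖ := Matrix.l2_opNorm_mul _ _
      _ ≤ ‖P * M * Qᴴ‖ := mul_le_of_le_one_left (norm_nonneg _) hPt

variable {n : ℕ}

noncomputable def splitIso (k : Fin n → ℕ+) : Matrix ((i : Fin n) × Fin (k i : ℕ)) (Fin n) ℝ :=
  fun p i' => if p.1 = i' then (Real.sqrt ((k p.1 : ℕ) : ℝ))⁻¹ else 0

lemma splitIso_iso (k : Fin n → ℕ+) : (splitIso k)ᴴ * (splitIso k) = 1 := by
  ext i i'
  rw [Matrix.mul_apply, ← Finset.univ_sigma_univ, Finset.sum_sigma]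
  have step : ∀ a : Fin n, (∑ _b : Fin (k a : ℕ),
      ((if a = i then (Real.sqrt ((k a : ℕ) : ℝ))⁻¹ else 0) *
       (if a = i' then (Real.sqrt ((k a : ℕ) : ℝ))⁻¹ else 0)))
      = if a = i then (if a = i' then 1 else 0) else 0 := by
    intro a
    rw [Finset.sum_const, Finset.card_univ, Fintype.card_fin, nsmul_eq_mul]
    have hk : (0 : ℝ) < ((k a : ℕ) : ℝ) := by exact_mod_cast (k a).pos
    by_cases h1 : a = i
    · subst h1
      by_cases h2 : a = i'
      · subst h2
        simp only [if_true, eq_self_iff_true]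
        rw [← mul_inv, Real.mul_self_sqrt hk.le, mul_inv_cancel₀ hk.ne']
      · simp [h2]
    · simp [h1]
  calc (∑ a : Fin n, ∑ b : Fin (k a : ℕ),
        (splitIso k)ᴴ i ⟨a, b⟩ * (splitIso k) ⟨a, b⟩ i')
      = ∑ a : Fin n, ∑ _b : Fin (k a : ℕ),
        ((if a = i then (Real.sqrt ((k a : ℕ) : ℝ))⁻¹ else 0) *
         (if a = i' then (Real.sqrt ((k a : ℕ) : ℝ))⁻¹ else 0)) := by
        refine Finset.sum_congr rfl fun a _ => Finset.sum_congr rfl fun b _ => ?_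
        simp [Matrix.conjTranspose_apply, splitIso]
    _ = ∑ a : Fin n, if a = i then (if a = i' then 1 else 0) else 0 :=
        Finset.sum_congr rfl fun a _ => step a
    _ = (1 : Matrix (Fin n) (Fin n) ℝ) i i' := by
        by_cases h : i = i' <;> simp [h, Matrix.one_apply, Finset.sum_ite_eq]

lemma splitMatrix_factor {m : ℕ} (A : Matrix (Fin n) (Fin m) ℝ) (k : Fin n → ℕ+)
    (l : Fin m → ℕ+) :
    splitMatrix A k l = splitIso k *
      (Matrix.diagonal (fun i => (Real.sqrt ((k i : ℕ) : ℝ))⁻¹) * A *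
        Matrix.diagonal (fun j => (Real.sqrt ((l j : ℕ) : ℝ))⁻¹)) * (splitIso l)ᴴ := by
  ext p q
  have hk : (0:ℝ) < ((k p.1 : ℕ) : ℝ) := by exact_mod_cast (k p.1).pos
  have hl : (0:ℝ) < ((l q.1 : ℕ) : ℝ) := by exact_mod_cast (l q.1).pos
  simp only [Matrix.mul_apply, Matrix.conjTranspose_apply, star_trivial, splitIso,
    Matrix.diagonal_apply, splitMatrix, ite_mul, mul_ite, zero_mul, mul_zero,
    Finset.sum_ite_eq, Finset.sum_ite_eq', Finset.mem_univ, if_true]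
  have e1 : (Real.sqrt ((k p.1 : ℕ) : ℝ))⁻¹ * (Real.sqrt ((k p.1 : ℕ) : ℝ))⁻¹
      = (((k p.1 : ℕ) : ℝ))⁻¹ := by rw [← mul_inv, Real.mul_self_sqrt hk.le]
  have e2 : (Real.sqrt ((l q.1 : ℕ) : ℝ))⁻¹ * (Real.sqrt ((l q.1 : ℕ) : ℝ))⁻¹
      = (((l q.1 : ℕ) : ℝ))⁻¹ := by rw [← mul_inv, Real.mul_self_sqrt hl.le]
  calc A p.1 q.1 / (((k p.1 : ℕ) : ℝ) * ((l q.1 : ℕ) : ℝ))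
      = ((Real.sqrt ((k p.1 : ℕ) : ℝ))⁻¹ * (Real.sqrt ((k p.1 : ℕ) : ℝ))⁻¹) * A p.1 q.1 *
        ((Real.sqrt ((l q.1 : ℕ) : ℝ))⁻¹ * (Real.sqrt ((l q.1 : ℕ) : ℝ))⁻¹) := by
        rw [e1, e2, div_eq_mul_inv, mul_inv]; ring
    _ = _ := by ring

lemma splitMatrix_norm {m : ℕ} (A : Matrix (Fin n) (Fin m) ℝ) (k : Fin n → ℕ+)
    (l : Fin m → ℕ+) :
    l2OpNorm (splitMatrix A k l) =
      l2OpNorm (Matrix.diagonal (fun i => (Real.sqrt ((k i : ℕ) : ℝ))⁻¹) * A *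
        Matrix.diagonal (fun j => (Real.sqrt ((l j : ℕ) : ℝ))⁻¹)) := by
  rw [l2OpNorm_eq_norm, l2OpNorm_eq_norm, splitMatrix_factor]
  exact norm_conj_iso _ _ (splitIso_iso k) (splitIso_iso l) _

end Aux

section Main
set_option maxHeartbeats 2000000
open scoped Matrix.Norms.L2Operator
open Filter Topology

/-- For a matrix `A` without zero rows or columns, the infimum of
`√(n'·m')·‖A'‖` over all splittings `A'` of `A` equals the infimum of
`‖D_w⁻¹ A D_v⁻¹‖·‖w‖·‖v‖` over all positive weight vectors `w, v`. -/
theorem inf_splittings_eq_inf_weights (n m : ℕ) (A : Matrix (Fin n) (Fin m) ℝ)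
    (hrow : ∀ i, ∃ j, A i j ≠ 0) (hcol : ∀ j, ∃ i, A i j ≠ 0) :
    sInf { r : ℝ | ∃ (k : Fin n → ℕ+) (l : Fin m → ℕ+),
        r = Real.sqrt ((∑ i, ((k i : ℕ) : ℝ)) * (∑ j, ((l j : ℕ) : ℝ))) *
            l2OpNorm (splitMatrix A k l) }
      = sInf { r : ℝ | ∃ (w : Fin n → ℝ) (v : Fin m → ℝ),
        (∀ i, 0 < w i) ∧ (∀ j, 0 < v j) ∧
        r = l2OpNorm (Matrix.diagonal (fun i => (w i)⁻¹) * A *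
              Matrix.diagonal (fun j => (v j)⁻¹)) *
            Real.sqrt (∑ i, w i ^ 2) * Real.sqrt (∑ j, v j ^ 2) } := by
  classical
  set S : Set ℝ := { r : ℝ | ∃ (k : Fin n → ℕ+) (l : Fin m → ℕ+),
        r = Real.sqrt ((∑ i, ((k i : ℕ) : ℝ)) * (∑ j, ((l j : ℕ) : ℝ))) *
            l2OpNorm (splitMatrix A k l) } with hSdef
  set T : Set ℝ := { r : ℝ | ∃ (w : Fin n → ℝ) (v : Fin m → ℝ),
        (∀ i, 0 < w i) ∧ (∀ j, 0 < v j) ∧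
        r = l2OpNorm (Matrix.diagonal (fun i => (w i)⁻¹) * A *
              Matrix.diagonal (fun j => (v j)⁻¹)) *
            Real.sqrt (∑ i, w i ^ 2) * Real.sqrt (∑ j, v j ^ 2) } with hTdef
  have hSne : S.Nonempty := ⟨_, ⟨fun _ => 1, fun _ => 1, rfl⟩⟩
  have hTne : T.Nonempty := ⟨_, ⟨fun _ => 1, fun _ => 1, fun _ => one_pos, fun _ => one_pos, rfl⟩⟩
  have hSbd : BddBelow S := by
    refine ⟨0, ?_⟩
    rintro r ⟨k, l, rfl⟩
    rw [l2OpNorm_eq_norm]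
    exact mul_nonneg (Real.sqrt_nonneg _) (norm_nonneg _)
  have hTbd : BddBelow T := by
    refine ⟨0, ?_⟩
    rintro r ⟨w, v, hw, hv, rfl⟩
    rw [l2OpNorm_eq_norm]
    exact mul_nonneg (mul_nonneg (norm_nonneg _) (Real.sqrt_nonneg _)) (Real.sqrt_nonneg _)
  apply le_antisymm
  · -- sInf S ≤ sInf T : approximate weights by splittings
    refine le_csInf hTne ?_
    rintro r ⟨w, v, hw, hv, rfl⟩
    set B : Matrix (Fin n) (Fin m) ℝ := Matrix.diagonal (fun i => (w i)⁻¹) * A *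
        Matrix.diagonal (fun j => (v j)⁻¹) with hB
    set W : ℝ := ∑ i, w i ^ 2 with hW
    set V : ℝ := ∑ j, v j ^ 2 with hV
    have hW0 : 0 ≤ W := Finset.sum_nonneg fun i _ => sq_nonneg _
    have hV0 : 0 ≤ V := Finset.sum_nonneg fun j _ => sq_nonneg _
    refine le_of_forall_pos_le_add fun ε hε => ?_
    have hlim : Tendsto (fun t : ℝ => ‖B‖ * Real.sqrt (W + n / t) * Real.sqrt (V + m / t))
        atTop (𝓝 (‖B‖ * Real.sqrt W * Real.sqrt V)) := by
      have hn : Tendsto (fun t : ℝ => (n : ℝ) / t) atTop (𝓝 0) :=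
        tendsto_const_nhds.div_atTop tendsto_id
      have hm : Tendsto (fun t : ℝ => (m : ℝ) / t) atTop (𝓝 0) :=
        tendsto_const_nhds.div_atTop tendsto_id
      have h1 : Tendsto (fun t : ℝ => Real.sqrt (W + n / t)) atTop (𝓝 (Real.sqrt W)) := by
        have := (Real.continuous_sqrt.tendsto W).comp
          (by simpa using tendsto_const_nhds.add hn :
            Tendsto (fun t : ℝ => W + n / t) atTop (𝓝 W))
        exact this
      have h2 : Tendsto (fun t : ℝ => Real.sqrt (V + m / t)) atTop (𝓝 (Real.sqrt V)) := by
        have := (Real.continuous_sqrt.tendsto V).comp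
          (by simpa using tendsto_const_nhds.add hm :
            Tendsto (fun t : ℝ => V + m / t) atTop (𝓝 V))
        exact this
      exact (tendsto_const_nhds.mul h1).mul h2
    have hr : ‖B‖ * Real.sqrt W * Real.sqrt V <
        l2OpNorm B * Real.sqrt W * Real.sqrt V + ε := by
      rw [l2OpNorm_eq_norm]
      exact lt_add_of_pos_right _ hε
    obtain ⟨t, ht1, htlt⟩ := ((eventually_ge_atTop (1 : ℝ)).and
      (hlim.eventually_lt_const hr)).exists
    have ht0 : (0 : ℝ) < t := zero_lt_one.trans_le ht1
    set k : Fin n → ℕ+ := fun i => ⟨⌈t * w i ^ 2⌉₊, Nat.ceil_pos.mpr (mul_pos ht0 (pow_pos (hw i) 2))⟩ with hk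
    set l : Fin m → ℕ+ := fun j => ⟨⌈t * v j ^ 2⌉₊, Nat.ceil_pos.mpr (mul_pos ht0 (pow_pos (hv j) 2))⟩ with hl
    have hklow : ∀ i, t * w i ^ 2 ≤ ((k i : ℕ) : ℝ) := fun i => Nat.le_ceil _
    have hllow : ∀ j, t * v j ^ 2 ≤ ((l j : ℕ) : ℝ) := fun j => Nat.le_ceil _
    have hkup : (∑ i, ((k i : ℕ) : ℝ)) ≤ t * W + n := by
      have h : ∀ i, ((k i : ℕ) : ℝ) ≤ t * w i ^ 2 + 1 := fun i =>
        (Nat.ceil_lt_add_one (mul_nonneg ht0.le (sq_nonneg _))).le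
      calc (∑ i, ((k i : ℕ) : ℝ)) ≤ ∑ i, (t * w i ^ 2 + 1) :=
          Finset.sum_le_sum fun i _ => h i
        _ = t * W + n := by
          rw [Finset.sum_add_distrib, ← Finset.mul_sum, Finset.sum_const, Finset.card_univ,
            Fintype.card_fin, nsmul_eq_mul, mul_one, hW]
    have hlup : (∑ j, ((l j : ℕ) : ℝ)) ≤ t * V + m := by
      have h : ∀ j, ((l j : ℕ) : ℝ) ≤ t * v j ^ 2 + 1 := fun j =>
        (Nat.ceil_lt_add_one (mul_nonneg ht0.le (sq_nonneg _))).le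
      calc (∑ j, ((l j : ℕ) : ℝ)) ≤ ∑ j, (t * v j ^ 2 + 1) :=
          Finset.sum_le_sum fun j _ => h j
        _ = t * V + m := by
          rw [Finset.sum_add_distrib, ← Finset.mul_sum, Finset.sum_const, Finset.card_univ,
            Fintype.card_fin, nsmul_eq_mul, mul_one, hV]
    have hmem : (Real.sqrt ((∑ i, ((k i : ℕ) : ℝ)) * (∑ j, ((l j : ℕ) : ℝ))) *
        l2OpNorm (splitMatrix A k l)) ∈ S := ⟨k, l, rfl⟩
    refine (csInf_le hSbd hmem).trans ?_
    -- the key norm bound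
    have hnormsplit : l2OpNorm (splitMatrix A k l) ≤ t⁻¹ * ‖B‖ := by
      rw [splitMatrix_norm]
      set c : Fin n → ℝ := fun i => Real.sqrt t * w i / Real.sqrt ((k i : ℕ) : ℝ) with hc
      set d : Fin m → ℝ := fun j => Real.sqrt t * v j / Real.sqrt ((l j : ℕ) : ℝ) with hd
      have hkpos : ∀ i, (0 : ℝ) < ((k i : ℕ) : ℝ) := fun i => by exact_mod_cast (k i).pos
      have hlpos : ∀ j, (0 : ℝ) < ((l j : ℕ) : ℝ) := fun j => by exact_mod_cast (l j).pos
      have hfac : Matrix.diagonal (fun i => (Real.sqrt ((k i : ℕ) : ℝ))⁻¹) * A *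
          Matrix.diagonal (fun j => (Real.sqrt ((l j : ℕ) : ℝ))⁻¹)
          = t⁻¹ • (Matrix.diagonal c * B * Matrix.diagonal d) := by
        ext i j
        have hst : Real.sqrt t * Real.sqrt t = t := Real.mul_self_sqrt ht0.le
        have hsk : Real.sqrt ((k i : ℕ) : ℝ) ≠ 0 := (Real.sqrt_pos.mpr (hkpos i)).ne'
        have hsl : Real.sqrt ((l j : ℕ) : ℝ) ≠ 0 := (Real.sqrt_pos.mpr (hlpos j)).ne'
        have hstne : Real.sqrt t ≠ 0 := (Real.sqrt_pos.mpr ht0).ne'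
        simp only [Matrix.smul_apply, Matrix.mul_apply, Matrix.diagonal_apply, hB, hc, hd,
          ite_mul, mul_ite, zero_mul, mul_zero, Finset.sum_ite_eq, Finset.sum_ite_eq',
          Finset.mem_univ, if_true, smul_eq_mul]
        have hwne : w i ≠ 0 := (hw i).ne'
        have hvne : v j ≠ 0 := (hv j).ne'
        have htne : t ≠ 0 := ht0.ne'
        field_simp
        linear_combination (-(A i j)) * hst
      rw [l2OpNorm_eq_norm, hfac, norm_smul, Real.norm_eq_abs,
        abs_of_pos (inv_pos.mpr ht0)]
      have hc1 : ∀ i, |c i| ≤ 1 := by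
        intro i
        have hskpos : 0 < Real.sqrt ((k i : ℕ) : ℝ) := Real.sqrt_pos.mpr (hkpos i)
        simp only [hc]
        rw [abs_of_nonneg (div_nonneg (mul_nonneg (Real.sqrt_nonneg t) (hw i).le)
          (Real.sqrt_nonneg _)), div_le_one hskpos]
        calc Real.sqrt t * w i
            = Real.sqrt (t * w i ^ 2) := by
              rw [Real.sqrt_mul ht0.le, Real.sqrt_sq (hw i).le]
          _ ≤ Real.sqrt ((k i : ℕ) : ℝ) := Real.sqrt_le_sqrt (hklow i)
      have hd1 : ∀ j, |d j| ≤ 1 := by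
        intro j
        have hslpos : 0 < Real.sqrt ((l j : ℕ) : ℝ) := Real.sqrt_pos.mpr (hlpos j)
        simp only [hd]
        rw [abs_of_nonneg (div_nonneg (mul_nonneg (Real.sqrt_nonneg t) (hv j).le)
          (Real.sqrt_nonneg _)), div_le_one hslpos]
        calc Real.sqrt t * v j
            = Real.sqrt (t * v j ^ 2) := by
              rw [Real.sqrt_mul ht0.le, Real.sqrt_sq (hv j).le]
          _ ≤ Real.sqrt ((l j : ℕ) : ℝ) := Real.sqrt_le_sqrt (hllow j)
      have hbound : ‖Matrix.diagonal c * B * Matrix.diagonal d‖ ≤ ‖B‖ :=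
        calc ‖Matrix.diagonal c * B * Matrix.diagonal d‖
            ≤ ‖Matrix.diagonal c * B‖ * ‖Matrix.diagonal d‖ := Matrix.l2_opNorm_mul _ _
          _ ≤ ‖Matrix.diagonal c * B‖ :=
            mul_le_of_le_one_right (norm_nonneg _) (norm_diagonal_le_one d hd1)
          _ ≤ ‖Matrix.diagonal c‖ * ‖B‖ := Matrix.l2_opNorm_mul _ _
          _ ≤ ‖B‖ := mul_le_of_le_one_left (norm_nonneg _) (norm_diagonal_le_one c hc1)
      exact mul_le_mul_of_nonneg_left hbound (inv_pos.mpr ht0).le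
    have hsum0 : (0:ℝ) ≤ ∑ j, ((l j : ℕ) : ℝ) := Finset.sum_nonneg fun j _ => by positivity
    have hsplit0 : 0 ≤ l2OpNorm (splitMatrix A k l) := by
      rw [l2OpNorm_eq_norm]; exact norm_nonneg _
    calc Real.sqrt ((∑ i, ((k i : ℕ) : ℝ)) * (∑ j, ((l j : ℕ) : ℝ))) *
          l2OpNorm (splitMatrix A k l)
        ≤ Real.sqrt ((t * W + n) * (t * V + m)) * (t⁻¹ * ‖B‖) := by
          apply mul_le_mul _ hnormsplit hsplit0 (Real.sqrt_nonneg _)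
          exact Real.sqrt_le_sqrt (mul_le_mul hkup hlup hsum0 (by positivity))
      _ = ‖B‖ * Real.sqrt (W + n / t) * Real.sqrt (V + m / t) := by
          have e1 : t * W + (n : ℝ) = t * (W + n / t) := by field_simp
          have e2 : t * V + (m : ℝ) = t * (V + m / t) := by field_simp
          have hWn : (0:ℝ) ≤ W + n / t := by positivity
          have hVm : (0:ℝ) ≤ V + m / t := by positivity
          rw [e1, e2, Real.sqrt_mul (by positivity : (0:ℝ) ≤ t * (W + n / t)),
            Real.sqrt_mul ht0.le, Real.sqrt_mul ht0.le]
          have hst : Real.sqrt t * Real.sqrt t = t := Real.mul_self_sqrt ht0.le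
          have hrw : Real.sqrt t * Real.sqrt (W + n / t) * (Real.sqrt t * Real.sqrt (V + m / t)) *
              (t⁻¹ * ‖B‖) = (Real.sqrt t * Real.sqrt t * t⁻¹) *
              (‖B‖ * Real.sqrt (W + n / t) * Real.sqrt (V + m / t)) := by ring
          rw [hrw, hst, mul_inv_cancel₀ ht0.ne', one_mul]
      _ ≤ l2OpNorm B * Real.sqrt W * Real.sqrt V + ε := htlt.le
  · -- sInf T ≤ sInf S : every splitting value is a weight value
    refine csInf_le_csInf hTbd hSne ?_
    rintro r ⟨k, l, rfl⟩
    refine ⟨fun i => Real.sqrt ((k i : ℕ) : ℝ), fun j => Real.sqrt ((l j : ℕ) : ℝ),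
      fun i => Real.sqrt_pos.mpr (by exact_mod_cast (k i).pos),
      fun j => Real.sqrt_pos.mpr (by exact_mod_cast (l j).pos), ?_⟩
    have hsq : ∀ i : Fin n, Real.sqrt ((k i : ℕ) : ℝ) ^ 2 = ((k i : ℕ) : ℝ) := fun i =>
      Real.sq_sqrt (by positivity)
    have hsq' : ∀ j : Fin m, Real.sqrt ((l j : ℕ) : ℝ) ^ 2 = ((l j : ℕ) : ℝ) := fun j =>
      Real.sq_sqrt (by positivity)
    simp_rw [hsq, hsq']
    rw [splitMatrix_norm A k l, Real.sqrt_mul (Finset.sum_nonneg fun i _ => by positivity)]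
    ring

end Main
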